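/- arXiv:2411.17010 — 2 statements merged into one kernel-verified Lean document; each statement's English description precedes it below -/
import Mathlib

section
/- Let x = 70 = 2 · 5 · 7 in the arithmetical congruence monoid M_{4,6}. Then the maximum number ℓ_0^M(x^n) of distinct atoms in a factorization of x^n grows like Θ(n^{2/3}): there are positive constants c_1, c_2 such that c_1 n^{2/3} ≤ ℓ_0^M(70^n) ≤ c_2 n^{2/3} for all sufficiently large n. -/
/-- The arithmetical congruence monoid `M_{4,6}` as a subset of `ℕ`. -/
def M46 : Set ℕ := {n | n = 1 ∨ (1 ≤ n ∧ n % 6 = 4)}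

/-- An atom (irreducible element) of `M_{4,6}`. -/
def IsAtom46 (u : ℕ) : Prop :=
  u ∈ M46 ∧ 1 < u ∧ ∀ v w, v ∈ M46 → w ∈ M46 → u = v * w → v = 1 ∨ w = 1
lemma mem46_of {x : ℕ} (h2 : x % 2 = 0) (h3 : x % 3 = 1) : x ∈ M46 := by
  right
  have e2 : x % 6 % 2 = x % 2 := Nat.mod_mod_of_dvd x (by norm_num)
  have e3 : x % 6 % 3 = x % 3 := Nat.mod_mod_of_dvd x (by norm_num)
  have : x % 6 < 6 := Nat.mod_lt _ (by norm_num)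
  constructor
  · omega
  · omega

lemma mod6_of_mem {x : ℕ} (hx : x ∈ M46) (h1 : x ≠ 1) : x % 6 = 4 := by
  rcases hx with h | h
  · exact absurd h h1
  · exact h.2

lemma pow2_mod3 (k : ℕ) : 2 ^ k % 3 = if Even k then 1 else 2 := by
  induction k with
  | zero => simp
  | succ k ih =>
    rw [pow_succ, Nat.mul_mod, ih]
    rcases Nat.even_or_odd k with h | h
    · simp [h, Nat.even_add_one, Nat.not_even_iff_odd, h.add_one]
    · simp [Nat.not_even_iff_odd.2 h, Nat.even_add_one, Nat.not_odd_iff_even.1 (by simpa using h.add_one)]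

lemma mod3_257 (a b c : ℕ) : (2 ^ a * 5 ^ b * 7 ^ c) % 3 = 2 ^ (a + b) % 3 := by
  conv_lhs => rw [Nat.mul_mod, Nat.mul_mod (2^a), Nat.pow_mod 2, Nat.pow_mod 5, Nat.pow_mod 7]
  rw [pow_add, Nat.mul_mod (2^a), Nat.pow_mod 2 a, Nat.pow_mod 2 b]
  norm_num
lemma mem46_257 {a b : ℕ} (c : ℕ) (ha : 1 ≤ a) (hab : Even (a + b)) :
    2 ^ a * 5 ^ b * 7 ^ c ∈ M46 := by
  apply mem46_of
  · obtain ⟨a, rfl⟩ := Nat.exists_eq_add_of_le ha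
    have : 2 ∣ 2 ^ (1 + a) * 5 ^ b * 7 ^ c := ⟨2 ^ a * 5 ^ b * 7 ^ c, by ring⟩
    omega
  · rw [mod3_257, pow2_mod3, if_pos hab]

lemma even_of_mem {v : ℕ} (hv : v ∈ M46) (h1 : v ≠ 1) : ∃ v', v = 2 * v' := by
  have h6 := mod6_of_mem hv h1
  have e2 : v % 6 % 2 = v % 2 := Nat.mod_mod_of_dvd v (by norm_num)
  have : v % 2 = 0 := by omega
  exact ⟨v / 2, by omega⟩

lemma atom2 {b : ℕ} (c : ℕ) (hb : Odd b) : IsAtom46 (2 * 5 ^ b * 7 ^ c) := by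
  have hodd : Odd (5 ^ b * 7 ^ c) := Odd.mul (Odd.pow (by decide)) (Odd.pow (by decide))
  refine ⟨?_, ?_, ?_⟩
  · have := mem46_257 (a := 1) (b := b) c le_rfl (by simpa [add_comm] using hb.add_one)
    simpa using this
  · have h5 : 1 ≤ 5 ^ b := Nat.one_le_pow _ _ (by norm_num)
    have h7 : 1 ≤ 7 ^ c := Nat.one_le_pow _ _ (by norm_num)
    nlinarith
  · intro v w hv hw heq
    by_contra h
    push_neg at h
    obtain ⟨v', rfl⟩ := even_of_mem hv h.1
    obtain ⟨w', rfl⟩ := even_of_mem hw h.2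
    have hx : 5 ^ b * 7 ^ c % 2 = 1 := Nat.odd_iff.mp hodd
    have h2 : 5 ^ b * 7 ^ c = 2 * (v' * w') := by nlinarith [heq]
    rw [h2] at hx
    simp [Nat.mul_mod_right] at hx

lemma atom4 (c : ℕ) : IsAtom46 (4 * 7 ^ c) := by
  refine ⟨?_, ?_, ?_⟩
  · have := mem46_257 (a := 2) (b := 0) c (by norm_num) (by norm_num)
    norm_num at this
    simpa using this
  · have h7 : 1 ≤ 7 ^ c := Nat.one_le_pow _ _ (by norm_num)
    nlinarith
  · intro v w hv hw heq
    by_contra h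
    push_neg at h
    obtain ⟨v', rfl⟩ := even_of_mem hv h.1
    obtain ⟨w', rfl⟩ := even_of_mem hw h.2
    have hvw : v' * w' = 7 ^ c := by nlinarith [heq]
    have hv' : v' ∣ 7 ^ c := ⟨w', hvw.symm⟩
    obtain ⟨i, hi, rfl⟩ := (Nat.dvd_prime_pow (by norm_num)).mp hv'
    have h6 := mod6_of_mem hv h.1
    have e3 : (2 * 7 ^ i) % 6 % 3 = (2 * 7 ^ i) % 3 := Nat.mod_mod_of_dvd _ (by norm_num)
    have h3 : (2 * 7 ^ i) % 3 = 2 := by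
      rw [Nat.mul_mod, Nat.pow_mod]
      norm_num
    omega

lemma fac257 (a b c : ℕ) :
    (2 ^ a * 5 ^ b * 7 ^ c).factorization 2 = a ∧
    (2 ^ a * 5 ^ b * 7 ^ c).factorization 5 = b ∧
    (2 ^ a * 5 ^ b * 7 ^ c).factorization 7 = c := by
  have h2 : (2:ℕ) ^ a ≠ 0 := by positivity
  have h5 : (5:ℕ) ^ b ≠ 0 := by positivity
  have h7 : (7:ℕ) ^ c ≠ 0 := by positivity
  rw [Nat.factorization_mul (by positivity) h7, Nat.factorization_mul h2 h5,
    Nat.factorization_pow, Nat.factorization_pow, Nat.factorization_pow,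
    Nat.Prime.factorization (by norm_num), Nat.Prime.factorization (by norm_num),
    Nat.Prime.factorization (by norm_num)]
  simp [Finsupp.single_apply]

lemma dvd_70pow {u n : ℕ} (h : u ∣ 70 ^ n) :
    ∃ a b c, u = 2 ^ a * 5 ^ b * 7 ^ c := by
  have h70 : (70:ℕ) ^ n = 2 ^ n * (5 ^ n * 7 ^ n) := by rw [show (70:ℕ) = 2*(5*7) by norm_num, mul_pow, mul_pow]
  rw [h70] at h
  obtain ⟨x, yz, hx, hyz, rfl⟩ := exists_dvd_and_dvd_of_dvd_mul h
  obtain ⟨y, z, hy, hz, rfl⟩ := exists_dvd_and_dvd_of_dvd_mul hyz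
  obtain ⟨a, _, rfl⟩ := (Nat.dvd_prime_pow (by norm_num)).mp hx
  obtain ⟨b, _, rfl⟩ := (Nat.dvd_prime_pow (by norm_num)).mp hy
  obtain ⟨c, _, rfl⟩ := (Nat.dvd_prime_pow (by norm_num)).mp hz
  exact ⟨a, b, c, by ring⟩

lemma classify {u n : ℕ} (hdvd : u ∣ 70 ^ n) (hu : IsAtom46 u) :
    (∃ c, u = 2 ^ 2 * 5 ^ 0 * 7 ^ c) ∨ (∃ b c, Odd b ∧ u = 2 ^ 1 * 5 ^ b * 7 ^ c) := by
  obtain ⟨a, b, c, rfl⟩ := dvd_70pow hdvd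
  have hne1 : 2 ^ a * 5 ^ b * 7 ^ c ≠ 1 := by have := hu.2.1; omega
  have h6 := mod6_of_mem hu.1 hne1
  have e2 : (2 ^ a * 5 ^ b * 7 ^ c) % 6 % 2 = (2 ^ a * 5 ^ b * 7 ^ c) % 2 :=
    Nat.mod_mod_of_dvd _ (by norm_num)
  have e3 : (2 ^ a * 5 ^ b * 7 ^ c) % 6 % 3 = (2 ^ a * 5 ^ b * 7 ^ c) % 3 :=
    Nat.mod_mod_of_dvd _ (by norm_num)
  have h3 : (2 ^ a * 5 ^ b * 7 ^ c) % 3 = 1 := by omega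
  have h2 : (2 ^ a * 5 ^ b * 7 ^ c) % 2 = 0 := by omega
  -- a ≥ 1
  have ha : 1 ≤ a := by
    by_contra hc
    push_neg at hc
    interval_cases a
    rw [pow_zero, one_mul] at h2
    have : Odd (5 ^ b * 7 ^ c) := Odd.mul (Odd.pow (by decide)) (Odd.pow (by decide))
    rw [Nat.odd_iff] at this
    omega
  -- Even (a+b)
  have hab : Even (a + b) := by
    rw [mod3_257, pow2_mod3] at h3
    by_contra hc
    rw [if_neg hc] at h3
    omega
  -- a ≤ 2
  have ha2 : a ≤ 2 := by
    by_contra hcon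
    push_neg at hcon
    obtain ⟨d, rfl⟩ : ∃ d, a = d + 3 := ⟨a - 3, by omega⟩
    have hmem : 2 ^ (d+1) * 5 ^ b * 7 ^ c ∈ M46 := by
      apply mem46_257 c (by omega)
      rcases hab with ⟨k, hk⟩
      exact ⟨k - 1, by omega⟩
    have h4 : (4:ℕ) ∈ M46 := Or.inr ⟨by norm_num, rfl⟩
    have heq : 2 ^ (d+3) * 5 ^ b * 7 ^ c = 4 * (2 ^ (d+1) * 5 ^ b * 7 ^ c) := by ring
    rcases hu.2.2 4 _ h4 hmem heq with h | h
    · norm_num at h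
    · have h5 : 1 ≤ 5 ^ b := Nat.one_le_pow _ _ (by norm_num)
      have h7 : 1 ≤ 7 ^ c := Nat.one_le_pow _ _ (by norm_num)
      have h2a : 2 ≤ 2 ^ (d+1) := by
        calc 2 = 2^1 := rfl
        _ ≤ 2 ^ (d+1) := Nat.pow_le_pow_right (by norm_num) (by omega)
      have hge : 2 * 1 * 1 ≤ 2 ^ (d+1) * 5 ^ b * 7 ^ c :=
        Nat.mul_le_mul (Nat.mul_le_mul h2a h5) h7
      omega
  interval_cases a
  · -- a = 1, b odd
    right
    refine ⟨b, c, ?_, rfl⟩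
    rcases Nat.even_or_odd b with hb | hb
    · exfalso
      have : Odd (1 + b) := by simpa [add_comm] using hb.add_one
      rw [Nat.even_iff, Nat.odd_iff] at *
      omega
    · exact hb
  · -- a = 2, b even; show b = 0
    left
    rcases Nat.eq_zero_or_pos b with hb0 | hbpos
    · exact ⟨c, by rw [hb0]⟩
    exfalso
    have hbodd : Odd (b - 1) := by
      rcases hab with ⟨k, hk⟩
      exact ⟨k - 2, by omega⟩
    have hmem : 2 ^ 1 * 5 ^ (b-1) * 7 ^ c ∈ M46 :=
      mem46_257 c le_rfl (by simpa [add_comm] using hbodd.add_one)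
    have h10 : (10:ℕ) ∈ M46 := Or.inr ⟨by norm_num, rfl⟩
    have heq : 2 ^ 2 * 5 ^ b * 7 ^ c = 2 ^ 1 * 5 ^ (b-1) * 7 ^ c * 10 := by
      have : (10:ℕ) = 2 * 5 := by norm_num
      rw [this]
      have hb : 5 ^ (b-1) * 5 = 5 ^ b := by
        rw [← pow_succ]
        congr 1
        omega
      calc 2 ^ 2 * 5 ^ b * 7 ^ c = 2 ^ 1 * (5 ^ (b-1) * 5) * 7 ^ c * 2 := by rw [hb]; ring
      _ = 2 ^ 1 * 5 ^ (b-1) * 7 ^ c * (2 * 5) := by ring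
    rcases hu.2.2 _ _ hmem h10 heq with h | h
    · have h5 : 1 ≤ 5 ^ (b-1) := Nat.one_le_pow _ _ (by norm_num)
      have h7 : 1 ≤ 7 ^ c := Nat.one_le_pow _ _ (by norm_num)
      nlinarith [h]
    · norm_num at h

lemma list_fact_sum (p : ℕ) : ∀ L : List ℕ, (∀ u ∈ L, u ≠ 0) →
    (L.map (fun u => u.factorization p)).sum = L.prod.factorization p := by
  intro L
  induction L with
  | nil => simp
  | cons a L ih =>
    intro h
    have ha : a ≠ 0 := h a (List.mem_cons_self)
    have hL : ∀ u ∈ L, u ≠ 0 := fun u hu => h u (List.mem_cons_of_mem a hu)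
    have hprod : L.prod ≠ 0 := by
      rw [Ne, List.prod_eq_zero_iff]
      intro h0
      exact hL 0 h0 rfl
    rw [List.map_cons, List.sum_cons, List.prod_cons,
      Nat.factorization_mul ha hprod, ih hL]
    simp

lemma toFinset_sum_le (g : ℕ → ℕ) : ∀ L : List ℕ, L.toFinset.sum g ≤ (L.map g).sum := by
  intro L
  induction L with
  | nil => simp
  | cons a L ih =>
    rw [List.toFinset_cons, List.map_cons, List.sum_cons]
    by_cases ha : a ∈ L.toFinset
    · rw [Finset.insert_eq_self.mpr ha]
      exact le_trans ih (Nat.le_add_left _ _)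
    · rw [Finset.sum_insert ha]
      exact Nat.add_le_add_left ih _

lemma distinct_sum : ∀ (S : Finset ℕ), S.card * (S.card - 1) ≤ 2 * S.sum id := by
  intro S
  induction S using Finset.strongInduction with
  | _ S ih =>
    rcases S.eq_empty_or_nonempty with rfl | hS
    · simp
    · set M := S.max' hS with hM
      have hMS : M ∈ S := S.max'_mem hS
      have hsub : S ⊆ Finset.range (M + 1) := by
        intro x hx
        rw [Finset.mem_range]
        exact Nat.lt_succ_of_le (S.le_max' x hx)
      have hcard : S.card ≤ M + 1 := by
        calc S.card ≤ (Finset.range (M+1)).card := Finset.card_le_card hsub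
        _ = M + 1 := Finset.card_range _
      have herase := ih (S.erase M) (Finset.erase_ssubset hMS)
      have hcarde : (S.erase M).card = S.card - 1 := Finset.card_erase_of_mem hMS
      have hsum : M + (S.erase M).sum id = S.sum id := Finset.add_sum_erase S id hMS
      rw [hcarde] at herase
      rcases Nat.lt_or_ge S.card 2 with h2 | h2
      · interval_cases h : S.card <;> omega
      · obtain ⟨e, he⟩ : ∃ e, S.card = e + 2 := ⟨S.card - 2, by omega⟩
        rw [he] at hcard ⊢
        rw [he] at herase
        have hn1 : e + 2 - 1 = e + 1 := by omega
        have hn2 : e + 1 - 1 = e := by omega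
        rw [hn1] at herase ⊢
        rw [hn2] at herase
        have hkey : (e+2)*(e+1) = (e+1)*e + 2*(e+1) := by ring
        have hM : e + 1 ≤ M := by omega
        linarith

lemma prod_range_map {M : Type*} [CommMonoid M] (f : ℕ → M) (n : ℕ) :
    ((List.range n).map f).prod = ∏ i ∈ Finset.range n, f i := by
  induction n with
  | zero => simp
  | succ n ih => rw [List.range_succ, Finset.prod_range_succ, List.map_append, List.prod_append, ih]; simp

lemma atom_pos {u : ℕ} (hu : IsAtom46 u) : u ≠ 0 := by have := hu.2.1; omega

lemma pow70 (n : ℕ) : (70:ℕ) ^ n = 2 ^ n * 5 ^ n * 7 ^ n := by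
  rw [show (70:ℕ) = 2*5*7 by norm_num, mul_pow, mul_pow]

lemma upper {n : ℕ} (hn : 2 ≤ n) (L : List ℕ) (hL : ∀ u ∈ L, IsAtom46 u)
    (hprod : L.prod = 70 ^ n) :
    L.toFinset.card ≤ 6 * (Nat.findGreatest (fun b => b ^ 3 ≤ n) n + 1) ^ 2 := by
  classical
  set fg := Nat.findGreatest (fun b => b ^ 3 ≤ n) n with hfgdef
  set t := fg + 1 with htdef
  have hfg3 : fg ^ 3 ≤ n := Nat.findGreatest_spec (P := fun b => b ^ 3 ≤ n) (m := 1) (by omega) (by simpa using hn.trans' (by norm_num))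
  have hfgn : fg < n := by
    rcases Nat.lt_or_ge fg n with h | h
    · exact h
    · exfalso
      have h1 : fg ≤ n := Nat.findGreatest_le n
      have h2 : fg = n := le_antisymm h1 h
      rw [h2] at hfg3
      have hx : 2*2*n ≤ n*n*n := Nat.mul_le_mul (Nat.mul_le_mul hn hn) le_rfl
      have hy : n^3 = n*n*n := by ring
      omega
  have ht3 : n < t ^ 3 := by
    by_contra hcon
    push_neg at hcon
    exact Nat.findGreatest_is_greatest (P := fun b => b ^ 3 ≤ n) (show fg < t by omega) (show t ≤ n by omega) hcon
  have ht1 : 1 ≤ t := by omega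
  -- sums of exponents
  have hne : ∀ u ∈ L, u ≠ 0 := fun u hu => atom_pos (hL u hu)
  have hfact : ∀ p : ℕ, (L.map (fun u => u.factorization p)).sum = ((70:ℕ)^n).factorization p := by
    intro p
    rw [list_fact_sum p L hne, hprod]
  have hs5 : (L.map (fun u => u.factorization 5)).sum = n := by
    rw [hfact 5, pow70, (fac257 n n n).2.1]
  have hs7 : (L.map (fun u => u.factorization 7)).sum = n := by
    rw [hfact 7, pow70, (fac257 n n n).2.2]
  -- classification
  set T := L.toFinset with hT
  have hclass : ∀ u ∈ T, (∃ c, u = 2^2*5^0*7^c) ∨ (∃ b c, Odd b ∧ u = 2^1*5^b*7^c) := by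
    intro u hu
    rw [hT, List.mem_toFinset] at hu
    exact classify (hprod ▸ List.dvd_prod hu) (hL u hu)
  set T4 := T.filter (fun u => u.factorization 2 = 2) with hT4
  set T2 := T.filter (fun u => ¬ u.factorization 2 = 2) with hT2
  have hsplit : T4.card + T2.card = T.card :=
    Finset.card_filter_add_card_filter_not _
  have hT4form : ∀ u ∈ T4, ∃ c, u = 2^2*5^0*7^c := by
    intro u hu
    rw [hT4, Finset.mem_filter] at hu
    rcases hclass u hu.1 with h | ⟨b, c, hb, rfl⟩
    · exact h
    · exfalso
      have := (fac257 1 b c).1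
      rw [this] at hu
      omega
  have hT2form : ∀ u ∈ T2, ∃ b c, Odd b ∧ u = 2^1*5^b*7^c := by
    intro u hu
    rw [hT2, Finset.mem_filter] at hu
    rcases hclass u hu.1 with ⟨c, rfl⟩ | h
    · exfalso
      have := (fac257 2 0 c).1
      rw [this] at hu
      omega
    · exact h
  -- bound on T4
  have hsum7T : T.sum (fun u => u.factorization 7) ≤ n := by
    calc T.sum (fun u => u.factorization 7) ≤ (L.map (fun u => u.factorization 7)).sum :=
          toFinset_sum_le _ L
    _ = n := hs7
  have hsum5T : T.sum (fun u => u.factorization 5) ≤ n := by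
    calc T.sum (fun u => u.factorization 5) ≤ (L.map (fun u => u.factorization 5)).sum :=
          toFinset_sum_le _ L
    _ = n := hs5
  have hd : T4.card ≤ 3 * t ^ 2 := by
    set S4 := T4.image (fun u => u.factorization 7) with hS4
    have hinj : ∀ x ∈ T4, ∀ y ∈ T4, x.factorization 7 = y.factorization 7 → x = y := by
      intro x hx y hy hxy
      obtain ⟨c, rfl⟩ := hT4form x hx
      obtain ⟨c', rfl⟩ := hT4form y hy
      rw [(fac257 2 0 c).2.2, (fac257 2 0 c').2.2] at hxy
      rw [hxy]
    have hcard : S4.card = T4.card := Finset.card_image_of_injOn hinj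
    have hsum : S4.sum id = T4.sum (fun u => u.factorization 7) := Finset.sum_image hinj
    have hle : T4.sum (fun u => u.factorization 7) ≤ n := by
      refine le_trans (Finset.sum_le_sum_of_subset ?_) hsum7T
      exact Finset.filter_subset _ _
    have hdist := distinct_sum S4
    rw [hcard, hsum] at hdist
    have hdn : T4.card * (T4.card - 1) ≤ 2 * n := le_trans hdist (by omega)
    by_contra hcon
    push_neg at hcon
    have h1 : 3 * t^2 + 1 ≤ T4.card := hcon
    have e1 : (3*t^2+1)*(3*t^2) ≤ T4.card * (T4.card - 1) :=
      Nat.mul_le_mul h1 (by omega)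
    have e4 : t^3 ≤ t^2 * t^2 := by
      calc t^3 ≤ t^4 := Nat.pow_le_pow_right (by omega) (by norm_num)
      _ = t^2*t^2 := by ring
    nlinarith
  -- bound on T2
  have hk2 : T2.card ≤ 3 * t ^ 2 := by
    set P := T2.image (fun u => (u.factorization 5, u.factorization 7)) with hP
    have hinj : ∀ x ∈ T2, ∀ y ∈ T2,
        (x.factorization 5, x.factorization 7) = (y.factorization 5, y.factorization 7) → x = y := by
      intro x hx y hy hxy
      obtain ⟨b, c, _, rfl⟩ := hT2form x hx
      obtain ⟨b', c', _, rfl⟩ := hT2form y hy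
      rw [Prod.mk.injEq, (fac257 1 b c).2.1, (fac257 1 b c).2.2,
        (fac257 1 b' c').2.1, (fac257 1 b' c').2.2] at hxy
      rw [hxy.1, hxy.2]
    have hcard : P.card = T2.card := Finset.card_image_of_injOn hinj
    have hsum : P.sum (fun p => p.1 + p.2) =
        T2.sum (fun u => u.factorization 5 + u.factorization 7) := Finset.sum_image hinj
    have hW : P.sum (fun p => p.1 + p.2) ≤ 2 * n := by
      rw [hsum, Finset.sum_add_distrib]
      have h5 : T2.sum (fun u => u.factorization 5) ≤ n :=
        le_trans (Finset.sum_le_sum_of_subset (Finset.filter_subset _ _)) hsum5T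
      have h7 : T2.sum (fun u => u.factorization 7) ≤ n :=
        le_trans (Finset.sum_le_sum_of_subset (Finset.filter_subset _ _)) hsum7T
      omega
    set Pl := P.filter (fun p => p.1 + p.2 < t) with hPl
    set Pg := P.filter (fun p => ¬ p.1 + p.2 < t) with hPg
    have hPsplit : Pl.card + Pg.card = P.card :=
      Finset.card_filter_add_card_filter_not _
    have hPlcard : Pl.card ≤ t * t := by
      have hsub : Pl ⊆ (Finset.range t) ×ˢ (Finset.range t) := by
        intro p hp
        rw [hPl, Finset.mem_filter] at hp
        rw [Finset.mem_product, Finset.mem_range, Finset.mem_range]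
        omega
      calc Pl.card ≤ ((Finset.range t) ×ˢ (Finset.range t)).card := Finset.card_le_card hsub
      _ = t * t := by rw [Finset.card_product, Finset.card_range]
    have hPgsum : Pg.card * t ≤ Pg.sum (fun p => p.1 + p.2) := by
      have := Finset.card_nsmul_le_sum Pg (fun p => p.1 + p.2) t (by
        intro p hp
        rw [hPg, Finset.mem_filter] at hp
        show t ≤ p.1 + p.2
        omega)
      simpa [smul_eq_mul] using this
    have hPgle : Pg.sum (fun p => p.1 + p.2) ≤ P.sum (fun p => p.1 + p.2) :=
      Finset.sum_le_sum_of_subset (Finset.filter_subset _ _)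
    have hPgcard : Pg.card ≤ 2 * t ^ 2 := by
      have h1 : Pg.card * t ≤ 2 * t^2 * t := by
        calc Pg.card * t ≤ 2 * n := le_trans hPgsum (le_trans hPgle hW)
        _ ≤ 2 * t^3 := by omega
        _ = 2 * t^2 * t := by ring
      exact Nat.le_of_mul_le_mul_right h1 (by omega)
    have : P.card ≤ t * t + 2 * t^2 := by omega
    rw [hcard] at this
    nlinarith
  calc T.card = T4.card + T2.card := hsplit.symm
  _ ≤ 3 * t^2 + 3 * t^2 := Nat.add_le_add hd hk2
  _ = 6 * t^2 := by ring
lemma construct {n B g : ℕ} (hB : 2 ≤ B) (hg : g * 2 = B * (B - 1)) (hB3 : B ^ 3 + 1 ≤ n) :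
    ∃ L : List ℕ, (∀ u ∈ L, IsAtom46 u) ∧ L.prod = 70 ^ n ∧ B ^ 2 ≤ L.toFinset.card := by
  classical
  have hB1 : 1 ≤ B - 1 := by omega
  obtain ⟨p, hp⟩ : ∃ p, n = B ^ 3 + 1 + p := ⟨n - (B ^ 3 + 1), by omega⟩
  have hgB : 2 * (B * g) + B ^ 2 = B ^ 3 := by
    zify [show (1:ℕ) ≤ B by omega] at hg ⊢
    linear_combination (B : ℤ) * hg
  have hBgle : B * g ≤ n := by nlinarith [hgB, hp]
  obtain ⟨r, hr⟩ := Nat.le.dest hBgle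
  have hg1 : 1 ≤ B * g := by nlinarith [hg, hB, hB1]
  obtain ⟨s, hs⟩ := Nat.exists_eq_add_of_le hg1
  have hgsum : ∑ j ∈ Finset.range B, j = g := by
    have := Finset.sum_range_id_mul_two B
    omega
  set Lmain : List ℕ :=
    (List.range B).flatMap (fun i => (List.range B).map (fun j => 2 * 5 ^ (2*i+1) * 7 ^ j))
    with hLmain
  set L : List ℕ := Lmain ++ List.replicate (p+1) 10 ++ [4 * 7 ^ r] ++ List.replicate s 4
    with hLdef
  have hmemmain : ∀ i j, i < B → j < B → (2 * 5 ^ (2*i+1) * 7 ^ j) ∈ Lmain := by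
    intro i j hi hj
    rw [hLmain]
    rw [List.mem_flatMap]
    exact ⟨i, List.mem_range.mpr hi, List.mem_map.mpr ⟨j, List.mem_range.mpr hj, rfl⟩⟩
  refine ⟨L, ?_, ?_, ?_⟩
  · -- all atoms
    intro u hu
    rw [hLdef] at hu
    simp only [List.mem_append, List.mem_singleton] at hu
    rcases hu with ((hu | hu) | hu) | hu
    · rw [hLmain] at hu
      simp only [List.mem_flatMap, List.mem_map, List.mem_range] at hu
      obtain ⟨i, _, j, _, rfl⟩ := hu
      exact atom2 j ⟨i, by ring⟩
    · have h10 : u = 10 := List.eq_of_mem_replicate hu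
      rw [h10, show (10:ℕ) = 2 * 5 ^ 1 * 7 ^ 0 by norm_num]
      exact atom2 0 ⟨0, rfl⟩
    · rw [hu]
      exact atom4 r
    · have h4 : u = 4 := List.eq_of_mem_replicate hu
      rw [h4, show (4:ℕ) = 4 * 7 ^ 0 by norm_num]
      exact atom4 0
  · -- product
    have inner : ∀ i, ((List.range B).map (fun j => 2 * 5 ^ (2*i+1) * 7 ^ j)).prod
        = 2 ^ B * 5 ^ ((2*i+1)*B) * 7 ^ g := by
      intro i
      rw [prod_range_map, Finset.prod_mul_distrib, Finset.prod_const,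
        Finset.prod_pow_eq_pow_sum, hgsum, Finset.card_range, mul_pow, ← pow_mul]
    have hmain : Lmain.prod = 2 ^ (B*B) * 5 ^ ((2*g+B)*B) * 7 ^ (g*B) := by
      rw [hLmain, List.flatMap_def, List.prod_flatten, List.map_map]
      have : (List.prod ∘ fun i => (List.range B).map (fun j => 2 * 5 ^ (2*i+1) * 7 ^ j))
          = fun i => 2 ^ B * 5 ^ ((2*i+1)*B) * 7 ^ g := by
        funext i
        exact inner i
      rw [this, prod_range_map, Finset.prod_mul_distrib, Finset.prod_mul_distrib,
        Finset.prod_const, Finset.prod_const, Finset.prod_pow_eq_pow_sum,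
        Finset.card_range, ← pow_mul, ← pow_mul]
      congr 2
      · rw [← Finset.sum_mul]
        congr 1
        rw [Finset.sum_add_distrib, Finset.sum_const, Finset.card_range, ← Finset.mul_sum,
          hgsum, smul_eq_mul, mul_one]
    have e2 : B*B + (p+1) + 2 + 2*s = n := by
      zify; zify at hp hs hgB
      linear_combination (-2:ℤ) * hs + hgB - hp
    have e5 : (2*g+B)*B + (p+1) = n := by
      zify; zify at hp hgB
      linear_combination hgB - hp
    have e7 : g*B + r = n := by
      zify; zify at hr
      linear_combination hr
    rw [hLdef, List.prod_append, List.prod_append, List.prod_append, hmain,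
      List.prod_replicate, List.prod_replicate, List.prod_singleton, pow70,
      show (2:ℕ)^n = 2^(B*B + (p+1) + 2 + 2*s) from by rw [e2],
      show (5:ℕ)^n = 5^((2*g+B)*B + (p+1)) from by rw [e5],
      show (7:ℕ)^n = 7^(g*B + r) from by rw [e7],
      show (10:ℕ) = 2*5 from by norm_num,
      show (4:ℕ) = 2^2 from by norm_num]
    rw [mul_pow, ← pow_mul]
    ring
  · -- card
    set S : Finset ℕ :=
      (Finset.range B ×ˢ Finset.range B).image (fun q => 2 * 5 ^ (2*q.1+1) * 7 ^ q.2) with hS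
    have hinj : ∀ x ∈ Finset.range B ×ˢ Finset.range B, ∀ y ∈ Finset.range B ×ˢ Finset.range B,
        (2 * 5 ^ (2*x.1+1) * 7 ^ x.2 : ℕ) = 2 * 5 ^ (2*y.1+1) * 7 ^ y.2 → x = y := by
      intro x _ y _ hxy
      have h1 : (2 * 5 ^ (2*x.1+1) * 7 ^ x.2 : ℕ) = 2^1 * 5 ^ (2*x.1+1) * 7 ^ x.2 := by norm_num
      have h2 : (2 * 5 ^ (2*y.1+1) * 7 ^ y.2 : ℕ) = 2^1 * 5 ^ (2*y.1+1) * 7 ^ y.2 := by norm_num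
      rw [h1, h2] at hxy
      have h5 := congrArg (fun z => Nat.factorization z 5) hxy
      have h7 := congrArg (fun z => Nat.factorization z 7) hxy
      simp only [(fac257 1 (2*x.1+1) x.2).2.1, (fac257 1 (2*y.1+1) y.2).2.1,
        (fac257 1 (2*x.1+1) x.2).2.2, (fac257 1 (2*y.1+1) y.2).2.2] at h5 h7
      have : x.1 = y.1 := by omega
      exact Prod.ext this h7
    have hcard : S.card = B * B := by
      rw [hS, Finset.card_image_of_injOn hinj, Finset.card_product, Finset.card_range]
    have hsub : S ⊆ L.toFinset := by
      intro x hx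
      rw [hS, Finset.mem_image] at hx
      obtain ⟨q, hq, rfl⟩ := hx
      rw [Finset.mem_product, Finset.mem_range, Finset.mem_range] at hq
      rw [List.mem_toFinset, hLdef]
      simp only [List.mem_append]
      exact Or.inl (Or.inl (Or.inl (hmemmain q.1 q.2 hq.1 hq.2)))
    calc B ^ 2 = B * B := by ring
    _ = S.card := hcard.symm
    _ ≤ L.toFinset.card := Finset.card_le_card hsub

theorem stmt16 :
    ∃ c₁ c₂ : ℝ, 0 < c₁ ∧ 0 < c₂ ∧ ∃ N : ℕ, ∀ n ≥ N,
      ∃ m : ℕ, IsGreatest {m' | ∃ L : List ℕ, (∀ u ∈ L, IsAtom46 u) ∧ L.prod = 70 ^ n ∧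
          m' = L.toFinset.card} m ∧
        c₁ * (n : ℝ) ^ ((2 : ℝ) / 3) ≤ (m : ℝ) ∧
        (m : ℝ) ≤ c₂ * (n : ℝ) ^ ((2 : ℝ) / 3) := by
  refine ⟨1/3, 24, by norm_num, by norm_num, 9, ?_⟩
  intro n hn
  have hn9 : (9:ℕ) ≤ n := hn
  set B := Nat.findGreatest (fun b => b ^ 3 + 1 ≤ n) n with hBdef
  have hP2 : (2:ℕ) ^ 3 + 1 ≤ n := by norm_num; omega
  have hB2 : 2 ≤ B := Nat.le_findGreatest (by omega) hP2
  have hB3 : B ^ 3 + 1 ≤ n :=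
    Nat.findGreatest_spec (P := fun b => b ^ 3 + 1 ≤ n) (m := 2) (by omega) hP2
  have hBn : B + 1 ≤ n := by
    have h1 : 2*(2*B) ≤ B*(B*B) := Nat.mul_le_mul hB2 (Nat.mul_le_mul hB2 le_rfl)
    have h2 : B^3 = B*(B*B) := by ring
    omega
  have hn8 : n ≤ (B + 1) ^ 3 := by
    by_contra hcon
    push_neg at hcon
    exact Nat.findGreatest_is_greatest (P := fun b => b ^ 3 + 1 ≤ n)
      (show B < B + 1 by omega) hBn (show (B+1) ^ 3 + 1 ≤ n by omega)
  obtain ⟨L, hLa, hLp, hLc⟩ := construct hB2 (Finset.sum_range_id_mul_two B) hB3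
  set Sset := {m' | ∃ L : List ℕ, (∀ u ∈ L, IsAtom46 u) ∧ L.prod = 70 ^ n ∧
      m' = L.toFinset.card} with hSset
  have hmem : L.toFinset.card ∈ Sset := ⟨L, hLa, hLp, rfl⟩
  have hnonempty : Sset.Nonempty := ⟨_, hmem⟩
  set F := Nat.findGreatest (fun b => b ^ 3 ≤ n) n with hFdef
  have hbdd : BddAbove Sset := by
    refine ⟨6 * (F + 1) ^ 2, ?_⟩
    rintro x ⟨L', hL'a, hL'p, rfl⟩
    exact upper (by omega) L' hL'a hL'p
  refine ⟨sSup Sset, ⟨Nat.sSup_mem hnonempty hbdd, fun x hx => le_csSup hbdd hx⟩, ?_, ?_⟩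
  · -- lower bound
    have hm : B ^ 2 ≤ sSup Sset := le_trans hLc (le_csSup hbdd hmem)
    have h8 : 8 * n ≤ 27 * B ^ 3 := by nlinarith [hn8, hB2]
    have hn2 : n ^ 2 ≤ 27 * B ^ 6 := by nlinarith [h8]
    have hcast : ((B:ℝ))^2 ≤ ((sSup Sset : ℕ) : ℝ) := by exact_mod_cast hm
    refine le_trans ?_ hcast
    have hr : ((n:ℝ) ^ ((2:ℝ)/3)) ^ (3:ℕ) = (n:ℝ) ^ 2 := by
      rw [← Real.rpow_natCast ((n:ℝ) ^ ((2:ℝ)/3)) 3,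
        ← Real.rpow_mul (Nat.cast_nonneg n),
        show ((2:ℝ)/3) * ((3:ℕ):ℝ) = ((2:ℕ):ℝ) by push_cast; ring,
        Real.rpow_natCast]
    have h3 : ((1:ℝ)/3 * (n:ℝ) ^ ((2:ℝ)/3)) ^ (3:ℕ) ≤ (((B:ℝ))^2) ^ (3:ℕ) := by
      have hc : ((n:ℝ))^2 ≤ 27 * (B:ℝ)^6 := by exact_mod_cast hn2
      calc ((1:ℝ)/3 * (n:ℝ) ^ ((2:ℝ)/3)) ^ (3:ℕ)
          = (1/27) * (((n:ℝ) ^ ((2:ℝ)/3)) ^ (3:ℕ)) := by ring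
      _ = (1/27) * ((n:ℝ))^2 := by rw [hr]
      _ ≤ ((B:ℝ)^2)^(3:ℕ) := by nlinarith [hc]
    exact le_of_pow_le_pow_left₀ (by norm_num) (by positivity) h3
  · -- upper bound
    have hub : sSup Sset ≤ 6 * (F + 1) ^ 2 := by
      obtain ⟨L', hL'a, hL'p, hcardeq⟩ := Nat.sSup_mem hnonempty hbdd
      rw [hcardeq]
      exact upper (by omega) L' hL'a hL'p
    have hF3 : F ^ 3 ≤ n :=
      Nat.findGreatest_spec (P := fun b => b ^ 3 ≤ n) (m := 1) (by omega) (by omega)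
    have hn13 : ((n:ℝ) ^ ((1:ℝ)/3)) ^ (3:ℕ) = (n:ℝ) := by
      rw [← Real.rpow_natCast ((n:ℝ) ^ ((1:ℝ)/3)) 3,
        ← Real.rpow_mul (Nat.cast_nonneg n),
        show ((1:ℝ)/3) * ((3:ℕ):ℝ) = ((1:ℕ):ℝ) by push_cast; ring,
        Real.rpow_natCast]
      norm_num
    have hsq : ((n:ℝ) ^ ((1:ℝ)/3)) ^ (2:ℕ) = (n:ℝ) ^ ((2:ℝ)/3) := by
      rw [← Real.rpow_natCast ((n:ℝ) ^ ((1:ℝ)/3)) 2,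
        ← Real.rpow_mul (Nat.cast_nonneg n)]
      norm_num
    have hFle : (F:ℝ) ≤ (n:ℝ) ^ ((1:ℝ)/3) := by
      apply le_of_pow_le_pow_left₀ (n := 3) (by norm_num) (by positivity)
      rw [hn13]
      exact_mod_cast hF3
    have h1 : (1:ℝ) ≤ (n:ℝ) ^ ((1:ℝ)/3) :=
      Real.one_le_rpow (by exact_mod_cast (by omega : 1 ≤ n)) (by norm_num)
    have hFt : ((F:ℝ) + 1) ≤ 2 * (n:ℝ) ^ ((1:ℝ)/3) := by linarith
    calc ((sSup Sset : ℕ) : ℝ) ≤ ((6 * (F + 1) ^ 2 : ℕ) : ℝ) := by exact_mod_cast hub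
    _ = 6 * ((F:ℝ) + 1) ^ 2 := by push_cast; ring
    _ ≤ 6 * (2 * (n:ℝ) ^ ((1:ℝ)/3)) ^ 2 := by
        have h0 : (0:ℝ) ≤ (F:ℝ) + 1 := by positivity
        nlinarith [hFt, h0]
    _ = 24 * ((n:ℝ) ^ ((1:ℝ)/3)) ^ (2:ℕ) := by ring
    _ = 24 * (n:ℝ) ^ ((2:ℝ)/3) := by rw [hsq]
end

section
/- Fix x = 2^a · 5^b · 7^c in M_{4,6} with a ≥ 1. Then the minimum factorization length ℓ_1^m(x^n) and the minimum maximal-multiplicity ℓ_∞^m(x^n) over factorizations of x^n into atoms of M_{4,6} both grow linearly: ℓ_1^m(x^n) ∈ Θ(n) and ℓ_∞^m(x^n) ∈ Θ(n). -/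
/-- The 1-length of a factorization given as a list of atoms: the number of atoms
counted with multiplicity. -/
def len1 (L : List ℕ) : ℕ := L.length

/-- The ∞-length of a factorization given as a list of atoms: the maximum
multiplicity with which any atom occurs. -/
def lenInf (L : List ℕ) : ℕ := L.toFinset.sup (fun u => L.count u)

lemma M46_mul {v w : ℕ} (hv : v ∈ M46) (hw : w ∈ M46) : v * w ∈ M46 := by
  rcases hv with rfl | ⟨hv1, hv4⟩
  · simpa using hw
  rcases hw with rfl | ⟨hw1, hw4⟩
  · simpa using (show v ∈ M46 from Or.inr ⟨hv1, hv4⟩)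
  · right
    refine ⟨Nat.one_le_iff_ne_zero.2 (by positivity), ?_⟩
    rw [Nat.mul_mod, hv4, hw4]

lemma M46_pow {x : ℕ} (hx : x ∈ M46) (n : ℕ) : x ^ n ∈ M46 := by
  induction n with
  | zero => exact Or.inl (by simp)
  | succ k ih => rw [pow_succ]; exact M46_mul ih hx

lemma exists_fact : ∀ m : ℕ, m ∈ M46 → 1 < m →
    ∃ L : List ℕ, (∀ u ∈ L, IsAtom46 u) ∧ L.prod = m := by
  intro m
  induction m using Nat.strong_induction_on with
  | _ m ih =>
  intro hm h1
  by_cases h : IsAtom46 m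
  · exact ⟨[m], by simpa using h, by simp⟩
  · have : ∃ v w, v ∈ M46 ∧ w ∈ M46 ∧ m = v * w ∧ v ≠ 1 ∧ w ≠ 1 := by
      unfold IsAtom46 at h
      push_neg at h
      obtain ⟨v, w, hv, hw, heq, h1', h2'⟩ := h hm h1
      exact ⟨v, w, hv, hw, heq, h1', h2'⟩
    obtain ⟨v, w, hv, hw, heq, hv1, hw1⟩ := this
    have hv0 : 1 ≤ v := by rcases hv with rfl | ⟨h, _⟩ <;> omega
    have hw0 : 1 ≤ w := by rcases hw with rfl | ⟨h, _⟩ <;> omega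
    have hv2 : 1 < v := by omega
    have hw2 : 1 < w := by omega
    have hvlt : v < m := by nlinarith
    have hwlt : w < m := by nlinarith
    obtain ⟨Lv, hLv, hLvp⟩ := ih v hvlt hv hv2
    obtain ⟨Lw, hLw, hLwp⟩ := ih w hwlt hw hw2
    refine ⟨Lv ++ Lw, ?_, by simp [hLvp, hLwp, heq]⟩
    intro u hu
    rcases List.mem_append.1 hu with h | h
    · exact hLv u h
    · exact hLw u h

lemma atom_mod (u : ℕ) (hu : IsAtom46 u) : u % 6 = 4 := by
  obtain ⟨hm, h1, _⟩ := hu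
  rcases hm with rfl | ⟨_, h⟩ <;> omega

lemma atom_two_dvd (u : ℕ) (hu : IsAtom46 u) : 2 ∣ u := by
  have := atom_mod u hu; omega

lemma atom_not_eight (u : ℕ) (hu : IsAtom46 u) : ¬ (8 ∣ u) := by
  intro h8
  obtain ⟨v, hv⟩ := h8
  have hm := atom_mod u hu
  obtain ⟨_, h1, hat⟩ := hu
  have h4 : (4 : ℕ) ∈ M46 := Or.inr ⟨by norm_num, by norm_num⟩
  have := hat 4 (2 * v) h4 (Or.inr ⟨by omega, by omega⟩) (by omega)
  omega

lemma atom_f2 (u : ℕ) (hu : IsAtom46 u) :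
    1 ≤ u.factorization 2 ∧ u.factorization 2 ≤ 2 := by
  have h0 : u ≠ 0 := by have := atom_mod u hu; omega
  constructor
  · rw [← Nat.Prime.pow_dvd_iff_le_factorization Nat.prime_two h0, pow_one]
    exact atom_two_dvd u hu
  · by_contra h
    push_neg at h
    have : 2 ^ 3 ∣ u := (Nat.Prime.pow_dvd_iff_le_factorization Nat.prime_two h0).2 h
    exact atom_not_eight u hu (by norm_num at this ⊢; exact this)

lemma prod_fact (p : ℕ) : ∀ L : List ℕ, (∀ u ∈ L, u ≠ 0) →
    (L.prod).factorization p = (L.map (fun u => u.factorization p)).sum := by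
  intro L
  induction L with
  | nil => simp
  | cons a t ih =>
    intro h
    have ha : a ≠ 0 := h a (by simp)
    have ht : ∀ u ∈ t, u ≠ 0 := fun u hu => h u (by simp [hu])
    have htp : t.prod ≠ 0 := by
      have : 0 < t.prod := List.prod_pos (fun u hu => Nat.pos_of_ne_zero (ht u hu))
      omega
    rw [List.prod_cons, Nat.factorization_mul ha htp]
    simp [ih ht]

lemma prime_of_dvd (A B C p u : ℕ) (hu : u ∣ 2 ^ A * 5 ^ B * 7 ^ C)
    (hp : p.Prime) (hpd : p ∣ u) : p = 2 ∨ p = 5 ∨ p = 7 := by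
  have h := hpd.trans hu
  rcases (Nat.Prime.dvd_mul hp).1 h with h' | h'
  · rcases (Nat.Prime.dvd_mul hp).1 h' with h'' | h''
    · exact Or.inl ((Nat.prime_dvd_prime_iff_eq hp Nat.prime_two).1
        (hp.dvd_of_dvd_pow h''))
    · exact Or.inr (Or.inl ((Nat.prime_dvd_prime_iff_eq hp (by norm_num)).1
        (hp.dvd_of_dvd_pow h'')))
  · exact Or.inr (Or.inr ((Nat.prime_dvd_prime_iff_eq hp (by norm_num)).1
      (hp.dvd_of_dvd_pow h')))

lemma eq_of_257 (A B C u v : ℕ) (hu0 : u ≠ 0) (hv0 : v ≠ 0)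
    (hu : u ∣ 2 ^ A * 5 ^ B * 7 ^ C) (hv : v ∣ 2 ^ A * 5 ^ B * 7 ^ C)
    (h2 : u.factorization 2 = v.factorization 2)
    (h5 : u.factorization 5 = v.factorization 5)
    (h7 : u.factorization 7 = v.factorization 7) : u = v := by
  apply Nat.eq_of_factorization_eq hu0 hv0
  intro p
  by_cases hp : p = 2 ∨ p = 5 ∨ p = 7
  · rcases hp with rfl | rfl | rfl <;> assumption
  · push_neg at hp
    have hzu : u.factorization p = 0 := by
      by_contra h
      have hps : p ∈ u.primeFactors := by
        rw [← Nat.support_factorization]; exact Finsupp.mem_support_iff.2 h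
      have := prime_of_dvd A B C p u hu (Nat.prime_of_mem_primeFactors hps)
        (Nat.dvd_of_mem_primeFactors hps)
      tauto
    have hzv : v.factorization p = 0 := by
      by_contra h
      have hps : p ∈ v.primeFactors := by
        rw [← Nat.support_factorization]; exact Finsupp.mem_support_iff.2 h
      have := prime_of_dvd A B C p v hv (Nat.prime_of_mem_primeFactors hps)
        (Nat.dvd_of_mem_primeFactors hps)
      tauto
    rw [hzu, hzv]

lemma fact_xn (a b c n : ℕ) :
    ((2 ^ a * 5 ^ b * 7 ^ c) ^ n).factorization 2 = a * n ∧
    ((2 ^ a * 5 ^ b * 7 ^ c) ^ n).factorization 5 = b * n ∧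
    ((2 ^ a * 5 ^ b * 7 ^ c) ^ n).factorization 7 = c * n := by
  have h2 : (2:ℕ) ≠ 0 := by norm_num
  rw [Nat.factorization_pow, Nat.factorization_mul (by positivity) (by positivity),
    Nat.factorization_mul (by positivity) (by positivity),
    Nat.Prime.factorization_pow Nat.prime_two,
    Nat.Prime.factorization_pow (by norm_num : Nat.Prime 5),
    Nat.Prime.factorization_pow (by norm_num : Nat.Prime 7)]
  simp [Finsupp.single_apply, mul_comm]

lemma atoms_ne_zero (L : List ℕ) (hL : ∀ u ∈ L, IsAtom46 u) : ∀ u ∈ L, u ≠ 0 := by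
  intro u hu
  have := (hL u hu).2.1
  omega

lemma sum_count_f (L : List ℕ) (hL : ∀ u ∈ L, IsAtom46 u) (p : ℕ) :
    ∑ u ∈ L.toFinset, L.count u * u.factorization p = (L.prod).factorization p := by
  rw [prod_fact p L (atoms_ne_zero L hL), Finset.sum_list_map_count]
  simp [smul_eq_mul]

lemma len_bounds (a b c n : ℕ) (L : List ℕ) (hL : ∀ u ∈ L, IsAtom46 u)
    (hp : L.prod = (2 ^ a * 5 ^ b * 7 ^ c) ^ n) :
    a * n ≤ 2 * L.length ∧ L.length ≤ a * n := by
  have h2 := sum_count_f L hL 2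
  rw [hp, (fact_xn a b c n).1] at h2
  have hlen : ∑ u ∈ L.toFinset, L.count u = L.length :=
    List.sum_toFinset_count_eq_length L
  constructor
  · calc a * n = ∑ u ∈ L.toFinset, L.count u * u.factorization 2 := h2.symm
      _ ≤ ∑ u ∈ L.toFinset, L.count u * 2 := by
          apply Finset.sum_le_sum
          intro u hu
          exact Nat.mul_le_mul_left _ ((atom_f2 u (hL u (List.mem_toFinset.1 hu))).2)
      _ = 2 * L.length := by rw [← Finset.sum_mul, hlen, mul_comm]
  · calc L.length = ∑ u ∈ L.toFinset, L.count u * 1 := by simp [hlen]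
      _ ≤ ∑ u ∈ L.toFinset, L.count u * u.factorization 2 := by
          apply Finset.sum_le_sum
          intro u hu
          exact Nat.mul_le_mul_left _ ((atom_f2 u (hL u (List.mem_toFinset.1 hu))).1)
      _ = a * n := h2

lemma inf_bound (a b c n : ℕ) (ha : 1 ≤ a) (L : List ℕ) (hL : ∀ u ∈ L, IsAtom46 u)
    (hp : L.prod = (2 ^ a * 5 ^ b * 7 ^ c) ^ n) :
    a * n ≤ 12 * (4 * (b + c) + 4) ^ 2 * lenInf L := by
  set T : ℕ := 4 * (b + c) + 4 with hT
  set M : ℕ := lenInf L with hM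
  set t : Finset ℕ := L.toFinset with ht
  set w : ℕ → ℕ := fun u => u.factorization 5 + u.factorization 7 with hw
  have hX : (2 ^ a * 5 ^ b * 7 ^ c) ^ n = 2 ^ (a*n) * 5 ^ (b*n) * 7 ^ (c*n) := by
    rw [mul_pow, mul_pow, ← pow_mul, ← pow_mul, ← pow_mul]
  have h2 := sum_count_f L hL 2
  have h5 := sum_count_f L hL 5
  have h7 := sum_count_f L hL 7
  rw [hp, (fact_xn a b c n).1] at h2
  rw [hp, (fact_xn a b c n).2.1] at h5
  rw [hp, (fact_xn a b c n).2.2] at h7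
  have hSw : ∑ u ∈ t, L.count u * w u = (b + c) * n := by
    simp only [hw, mul_add, Finset.sum_add_distrib, ht, h5, h7]
    ring
  have hcnt : ∀ u ∈ t, L.count u ≤ M := by
    intro u hu
    rw [hM]
    unfold lenInf
    exact Finset.le_sup (f := fun v => L.count v) hu
  set heavy : Finset ℕ := t.filter (fun u => T ≤ w u) with hheavy
  set light : Finset ℕ := t.filter (fun u => ¬ T ≤ w u) with hlight
  set Hs : ℕ := ∑ u ∈ heavy, L.count u with hHs
  set Ls : ℕ := ∑ u ∈ light, L.count u with hLs
  -- (1)  a*n ≤ 2*Hs + 2*Ls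
  have h1 : a * n ≤ 2 * Hs + 2 * Ls := by
    calc a * n = ∑ u ∈ t, L.count u * u.factorization 2 := h2.symm
      _ ≤ ∑ u ∈ t, L.count u * 2 := by
          apply Finset.sum_le_sum
          intro u hu
          exact Nat.mul_le_mul_left _ ((atom_f2 u (hL u (List.mem_toFinset.1 hu))).2)
      _ = 2 * ∑ u ∈ t, L.count u := by rw [← Finset.sum_mul, mul_comm]
      _ = 2 * (Hs + Ls) := by
          rw [hHs, hLs, Finset.sum_filter_add_sum_filter_not]
      _ = 2 * Hs + 2 * Ls := by ring
  -- (2)  T * Hs ≤ (b+c)*n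
  have h2' : T * Hs ≤ (b + c) * n := by
    calc T * Hs = ∑ u ∈ heavy, T * L.count u := by rw [hHs, Finset.mul_sum]
      _ ≤ ∑ u ∈ heavy, L.count u * w u := by
          apply Finset.sum_le_sum
          intro u hu
          have hTu : T ≤ w u := (Finset.mem_filter.1 hu).2
          calc T * L.count u = L.count u * T := mul_comm _ _
            _ ≤ L.count u * w u := Nat.mul_le_mul_left _ hTu
      _ ≤ ∑ u ∈ t, L.count u * w u :=
          Finset.sum_le_sum_of_subset (Finset.filter_subset _ _)
      _ = (b + c) * n := hSw
  -- (3)  Ls ≤ M * (3*T*T)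
  have hcard : light.card ≤ 3 * T * T := by
    have : light.card ≤ ((Finset.range 3) ×ˢ (Finset.range T) ×ˢ (Finset.range T)).card := by
      apply Finset.card_le_card_of_injOn
        (fun u => (u.factorization 2, u.factorization 5, u.factorization 7))
      · intro u hu
        have hut : u ∈ t := (Finset.mem_filter.1 hu).1
        have huL : u ∈ L := List.mem_toFinset.1 hut
        have hatom := hL u huL
        have hwu : ¬ T ≤ w u := (Finset.mem_filter.1 hu).2
        have hf2 := atom_f2 u hatom
        show (u.factorization 2, u.factorization 5, u.factorization 7) ∈
          (Finset.range 3) ×ˢ (Finset.range T) ×ˢ (Finset.range T)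
        simp only [Finset.mem_product, Finset.mem_range]
        refine ⟨by omega, ?_, ?_⟩
        · simp only [hw] at hwu; omega
        · simp only [hw] at hwu; omega
      · intro u hu v hv heq
        simp only [Prod.mk.injEq] at heq
        have huL : u ∈ L := List.mem_toFinset.1 (Finset.mem_filter.1 hu).1
        have hvL : v ∈ L := List.mem_toFinset.1 (Finset.mem_filter.1 hv).1
        have hud : u ∣ 2 ^ (a*n) * 5 ^ (b*n) * 7 ^ (c*n) := by
          rw [← hX, ← hp]; exact List.dvd_prod huL
        have hvd : v ∣ 2 ^ (a*n) * 5 ^ (b*n) * 7 ^ (c*n) := by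
          rw [← hX, ← hp]; exact List.dvd_prod hvL
        exact eq_of_257 (a*n) (b*n) (c*n) u v
          (atoms_ne_zero L hL u huL) (atoms_ne_zero L hL v hvL)
          hud hvd heq.1 heq.2.1 heq.2.2
    simpa [Finset.card_product, mul_assoc] using this
  have h3 : Ls ≤ M * (3 * T * T) := by
    calc Ls ≤ ∑ _u ∈ light, M := by
          apply Finset.sum_le_sum
          intro u hu
          exact hcnt u (Finset.mem_filter.1 hu).1
      _ = light.card * M := by rw [Finset.sum_const, smul_eq_mul]
      _ ≤ (3 * T * T) * M := Nat.mul_le_mul_right _ hcard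
      _ = M * (3 * T * T) := mul_comm _ _
  -- combine
  have h4 : 4 * (b + c) ≤ T * a := by
    have : T ≤ T * a := Nat.le_mul_of_pos_right T (by omega)
    omega
  have hT0 : 0 < T := by omega
  have final : T * (a * n) ≤ T * (12 * T ^ 2 * M) := by nlinarith [h1, h2', h3, h4]
  exact Nat.le_of_mul_le_mul_left final hT0

lemma lenInf_le_length (L : List ℕ) : lenInf L ≤ L.length := by
  unfold lenInf
  exact Finset.sup_le (fun u _ => List.count_le_length)

theorem stmt18 (a b c : ℕ) (ha : 1 ≤ a) (hx : 2 ^ a * 5 ^ b * 7 ^ c ∈ M46) :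
    (∃ c₁ c₂ : ℝ, 0 < c₁ ∧ 0 < c₂ ∧ ∃ N : ℕ, ∀ n ≥ N,
      ∃ m : ℕ, IsLeast {m' | ∃ L : List ℕ, (∀ u ∈ L, IsAtom46 u) ∧
          L.prod = (2 ^ a * 5 ^ b * 7 ^ c) ^ n ∧ m' = len1 L} m ∧
        c₁ * (n : ℝ) ≤ (m : ℝ) ∧ (m : ℝ) ≤ c₂ * (n : ℝ)) ∧
    (∃ c₁ c₂ : ℝ, 0 < c₁ ∧ 0 < c₂ ∧ ∃ N : ℕ, ∀ n ≥ N,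
      ∃ m : ℕ, IsLeast {m' | ∃ L : List ℕ, (∀ u ∈ L, IsAtom46 u) ∧
          L.prod = (2 ^ a * 5 ^ b * 7 ^ c) ^ n ∧ m' = lenInf L} m ∧
        c₁ * (n : ℝ) ≤ (m : ℝ) ∧ (m : ℝ) ≤ c₂ * (n : ℝ)) := by
  have haR : (0 : ℝ) < a := by exact_mod_cast Nat.lt_of_lt_of_le Nat.zero_lt_one ha
  have hx2 : 2 ≤ 2 ^ a * 5 ^ b * 7 ^ c := by
    calc 2 = 2 * 1 * 1 := by ring
      _ ≤ 2 ^ a * 5 ^ b * 7 ^ c := by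
        apply Nat.mul_le_mul (Nat.mul_le_mul ?_ ?_) ?_
        · calc 2 = 2 ^ 1 := (pow_one 2).symm
            _ ≤ 2 ^ a := Nat.pow_le_pow_right (by norm_num) ha
        · exact Nat.one_le_pow _ _ (by norm_num)
        · exact Nat.one_le_pow _ _ (by norm_num)
  have hwitness : ∀ n : ℕ, 1 ≤ n → ∃ L : List ℕ, (∀ u ∈ L, IsAtom46 u) ∧
      L.prod = (2 ^ a * 5 ^ b * 7 ^ c) ^ n := by
    intro n hn
    have h1 : 1 < (2 ^ a * 5 ^ b * 7 ^ c) ^ n :=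
      Nat.one_lt_pow (by omega) (by omega)
    obtain ⟨L, hL, hLp⟩ := exists_fact _ (M46_pow hx n) h1
    exact ⟨L, hL, hLp⟩
  constructor
  · -- 1-length
    refine ⟨(a : ℝ) / 2, (a : ℝ), by positivity, haR, 1, fun n hn => ?_⟩
    obtain ⟨L0, hL0, hL0p⟩ := hwitness n hn
    set S : Set ℕ := {m' | ∃ L : List ℕ, (∀ u ∈ L, IsAtom46 u) ∧
        L.prod = (2 ^ a * 5 ^ b * 7 ^ c) ^ n ∧ m' = len1 L} with hS
    have hne : (len1 L0) ∈ S := ⟨L0, hL0, hL0p, rfl⟩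
    have hSne : S.Nonempty := ⟨_, hne⟩
    refine ⟨sInf S, ⟨Nat.sInf_mem hSne, fun m' hm' => Nat.sInf_le hm'⟩, ?_, ?_⟩
    · obtain ⟨L, hL, hLp, hmeq⟩ := Nat.sInf_mem hSne
      have hlow : a * n ≤ 2 * sInf S := by
        rw [hmeq]; exact (len_bounds a b c n L hL hLp).1
      have : (a : ℝ) * n ≤ 2 * ((sInf S : ℕ) : ℝ) := by exact_mod_cast hlow
      linarith
    · have hup : sInf S ≤ len1 L0 := Nat.sInf_le hne
      have := (len_bounds a b c n L0 hL0 hL0p).2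
      have : ((sInf S : ℕ) : ℝ) ≤ (a : ℝ) * n := by
        have h' : sInf S ≤ a * n := le_trans hup this
        exact_mod_cast h'
      linarith
  · -- ∞-length
    set D : ℝ := 12 * (4 * ((b : ℝ) + (c : ℝ)) + 4) ^ 2 with hD
    have hD0 : (0 : ℝ) < D := by positivity
    refine ⟨(a : ℝ) / D, (a : ℝ), by positivity, haR, 1, fun n hn => ?_⟩
    obtain ⟨L0, hL0, hL0p⟩ := hwitness n hn
    set S : Set ℕ := {m' | ∃ L : List ℕ, (∀ u ∈ L, IsAtom46 u) ∧
        L.prod = (2 ^ a * 5 ^ b * 7 ^ c) ^ n ∧ m' = lenInf L} with hS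
    have hne : (lenInf L0) ∈ S := ⟨L0, hL0, hL0p, rfl⟩
    have hSne : S.Nonempty := ⟨_, hne⟩
    refine ⟨sInf S, ⟨Nat.sInf_mem hSne, fun m' hm' => Nat.sInf_le hm'⟩, ?_, ?_⟩
    · obtain ⟨L, hL, hLp, hmeq⟩ := Nat.sInf_mem hSne
      have hlow : a * n ≤ 12 * (4 * (b + c) + 4) ^ 2 * sInf S := by
        rw [hmeq]; exact inf_bound a b c n ha L hL hLp
      have hcast : (a : ℝ) * n ≤ D * ((sInf S : ℕ) : ℝ) := by
        rw [hD]
        exact_mod_cast hlow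
      rw [div_mul_eq_mul_div, div_le_iff₀ hD0]
      linarith
    · have hup : sInf S ≤ len1 L0 :=
        le_trans (Nat.sInf_le hne) (lenInf_le_length L0)
      have := (len_bounds a b c n L0 hL0 hL0p).2
      have : ((sInf S : ℕ) : ℝ) ≤ (a : ℝ) * n := by
        have h' : sInf S ≤ a * n := le_trans hup this
        exact_mod_cast h'
      linarith
end
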